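/- arXiv:1506.03404 — 2 statements merged into one kernel-verified Lean document; each statement's English description precedes it below -/
import Mathlib

section
/- Let R be a supertropical semiring, V a free R-module with base (ε_i)_{i∈I}, and q a quasilinear quadratic form on V (i.e. q(u+v) = q(u)+q(v) for all u,v ∈ V). If x ∈ V \ {0} is q-minimal, then |supp(x)| = 1 if q(x) ∈ 𝒯(R), and |supp(x)| ≤ 2 if q(x) ∈ 𝒢(R). -/
open scoped Classical

namespace Supertrop

section Defs

variable (R : Type*) [CommSemiring R]

/-- The distinguished element `e = 1 + 1` of a semiring. -/
def eps : R := 1 + 1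

/-- `R` is a supertropical semiring: `e` is additively idempotent, and the two
supertropical addition axioms hold. -/
def IsSupertropical : Prop :=
  eps R + eps R = eps R ∧
    (∀ x y : R, eps R * x ≠ eps R * y → x + y = x ∨ x + y = y) ∧
    (∀ x y : R, eps R * x = eps R * y → x + y = eps R * y)

/-- The ghost ideal `eR`, as a subset of `R`. -/
def eSet : Set R := Set.range (fun a : R => eps R * a)

/-- The tangible elements `𝒯(R) = R \ eR`. -/
def tangible : Set R := {x : R | x ∉ eSet R}

/-- The nonzero ghost elements `𝒢(R) = eR \ {0}`. -/
def ghost : Set R := eSet R \ {0}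

end Defs

section Orders

variable {R : Type*} [CommSemiring R]

/-- The minimal ordering on an additive monoid: `x ≤ y` iff `∃ z, x + z = y`. -/
def mle {M : Type*} [AddCommMonoid M] (x y : M) : Prop := ∃ z, x + z = y

/-- Strict minimal ordering. -/
def mlt {M : Type*} [AddCommMonoid M] (x y : M) : Prop := mle x y ∧ x ≠ y

/-- The (total) ordering of the bipotent semiring `eR`: `u ≤ v ⟺ u + v = v`. -/
def gle (u v : R) : Prop := u + v = v

/-- The strict ordering of `eR`. -/
def glt (u v : R) : Prop := gle u v ∧ u ≠ v

end Orders

section SSF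

variable (R : Type*) [CommSemiring R]

/-- `R` is a supersemifield: supertropical, every tangible element is invertible in `R`,
and `𝒢(R)` is a group under multiplication with identity `e`. -/
def IsSupersemifield : Prop :=
  IsSupertropical R ∧
    (∀ t ∈ tangible R, IsUnit t) ∧
    eps R ∈ ghost R ∧
    (∀ g ∈ ghost R, ∀ h ∈ ghost R, g * h ∈ ghost R) ∧
    (∀ g ∈ ghost R, ∃ h ∈ ghost R, g * h = eps R)

/-- The supersemifield `R` is tangible: `e·𝒯(R) = 𝒢(R)`. -/
def TangibleSSF : Prop := (fun t => eps R * t) '' tangible R = ghost R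

/-- Nontriviality: `𝒢(R) ≠ {e}`. -/
def NontrivialG : Prop := ghost R ≠ {eps R}

/-- `R` is discrete: `𝒢(R)` has a smallest element `> e`. -/
def DiscreteR : Prop :=
  ∃ c ∈ ghost R, glt (eps R) c ∧ ∀ d ∈ ghost R, glt (eps R) d → gle c d

/-- `R` is dense: `𝒢(R)` has no smallest element `> e`. -/
def DenseR : Prop := ¬ DiscreteR R

/-- `eR` is a semifield: `e ≠ 0`, `𝒢(R)` is closed under multiplication, and every
element of `𝒢(R)` is invertible in `eR` with respect to the identity `e`. -/
def GhostSemifield : Prop :=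
  eps R ∈ ghost R ∧
    (∀ g ∈ ghost R, ∀ h ∈ ghost R, g * h ∈ ghost R) ∧
    (∀ g ∈ ghost R, ∃ h ∈ ghost R, g * h = eps R)

end SSF

section Quad

variable {R : Type*} [CommSemiring R] {V : Type*} [AddCommMonoid V] [Module R V]

/-- `b` is a (symmetric bilinear) companion of the quadratic form `q`. -/
def IsCompanion (q : V → R) (b : V → V → R) : Prop :=
  (∀ x y, b x y = b y x) ∧
    (∀ x y z, b (x + y) z = b x z + b y z) ∧
    (∀ (a : R) (x y : V), b (a • x) y = a * b x y) ∧
    (∀ x y, q (x + y) = q x + q y + b x y)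

/-- `(q, b)` is a quadratic pair on `V`. -/
def IsQuadPair (q : V → R) (b : V → V → R) : Prop :=
  (∀ (a : R) (x : V), q (a • x) = a ^ 2 * q x) ∧ IsCompanion q b

/-- `q` is a quadratic form on `V`. -/
def IsQuadForm (q : V → R) : Prop := ∃ b, IsQuadPair q b

/-- `q` is quasilinear (i.e. additive) on the submodule `W`. -/
def QuasilinearOn (q : V → R) (W : Submodule R V) : Prop :=
  ∀ u ∈ W, ∀ v ∈ W, q (u + v) = q u + q v

/-- `x` is `q`-minimal: `q x' < q x` for every `x' < x` (in the minimal orderings). -/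
def QMinimal (q : V → R) (x : V) : Prop := ∀ x' : V, mlt x' x → mlt (q x') (q x)

/-- The maximum of two elements of `R` with respect to the minimal ordering. -/
noncomputable def rsup (a b : R) : R := if a = b then a else a + b

/-- The componentwise maximum `x ∨ y` (in the minimal ordering) of two vectors
of a free module. -/
noncomputable def vsup {ι : Type*} (bV : Module.Basis ι R V) (x y : V) : V :=
  bV.repr.symm (Finsupp.zipWith rsup (by simp [rsup]) (bV.repr x) (bV.repr y))

/-- The restriction `x(J)` of a vector to a subset `J` of the index set of the base. -/
noncomputable def restrict {ι : Type*} (bV : Module.Basis ι R V) (x : V) (J : Finset ι) : V :=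
  ∑ i ∈ J, (bV.repr x) i • bV i

/-- The CS-ratio `CS(x,y) = e·b(x,y)² · (e·q(x)·q(y))⁻¹`, where `inv` is the
inversion of the semifield `eR`. -/
noncomputable def CSratio (q : V → R) (b : V → V → R) (inv : R → R) (x y : V) : R :=
  eps R * (b x y) ^ 2 * inv (eps R * (q x * q y))

end Quad

/-- Key supertropical lemma: if `p + r = s` with `p ≠ s` and `r ≠ s`, then
`s = e·p` and `s = e·r`. -/
theorem key_lemma {R : Type*} [CommSemiring R] (hR : IsSupertropical R)
    {p r s : R} (h : p + r = s) (hp : p ≠ s) (hr : r ≠ s) :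
    s = eps R * p ∧ s = eps R * r := by
  obtain ⟨-, h2, h3⟩ := hR
  by_cases hc : eps R * p = eps R * r
  · have hpr : p + r = eps R * r := h3 p r hc
    exact ⟨by rw [← h, hpr, hc], by rw [← h, hpr]⟩
  · rcases h2 p r hc with h' | h'
    · exact absurd (h' ▸ h) hp
    · exact absurd (h' ▸ h) hr

/-- for a quasilinear quadratic form, a `q`-minimal vector has support
of size `1` if `q(x)` is tangible, and at most `2` if `q(x)` is ghost. -/
theorem stmt12 {R : Type*} [CommSemiring R] (hR : IsSupertropical R)
    {V : Type*} [AddCommMonoid V] [Module R V] {ι : Type*} (bV : Module.Basis ι R V)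
    (q : V → R) (hhom : ∀ (a : R) (v : V), q (a • v) = a ^ 2 * q v)
    (hql : ∀ u v : V, q (u + v) = q u + q v)
    (x : V) (hx : x ≠ 0) (hmin : QMinimal q x) :
    (q x ∈ tangible R → (bV.repr x).support.card = 1) ∧
    (q x ∈ ghost R → (bV.repr x).support.card ≤ 2) := by
  set f := bV.repr x with hf
  have hfne : f ≠ 0 := by
    intro h0
    apply hx
    have := congrArg bV.repr.symm h0
    simpa [hf] using this
  have hsupp : f.support.Nonempty := Finsupp.support_nonempty_iff.mpr hfne
  -- a vector differing from `x` at a coordinate in the support is ≠ x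
  have hneq : ∀ (w : V) (l : ι), bV.repr w l = 0 → l ∈ f.support → w ≠ x := by
    intro w l h0 hl heq
    have hfl : f l ≠ 0 := Finsupp.mem_support_iff.mp hl
    apply hfl
    have := congrArg (fun z => bV.repr z l) heq
    rw [← hf] at this
    rw [← this, h0]
  constructor
  · -- tangible case
    intro ht
    have h1 : 1 ≤ f.support.card := Finset.card_pos.mpr hsupp
    have h2 : ¬ (1 < f.support.card) := by
      intro hlt
      obtain ⟨i, hi, j, hj, hij⟩ := Finset.one_lt_card.mp hlt
      set u : V := bV.repr.symm (f.filter (· = i)) with hu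
      set y : V := bV.repr.symm (f.filter (· ≠ i)) with hy
      have hru : bV.repr u = f.filter (· = i) := by simp [hu]
      have hry : bV.repr y = f.filter (· ≠ i) := by simp [hy]
      have hxuy : u + y = x := by
        apply bV.repr.injective
        rw [map_add, hru, hry, ← hf]
        ext l
        by_cases hl : l = i <;> simp [Finsupp.filter_apply, hl]
      have hux : mlt u x := by
        refine ⟨⟨y, hxuy⟩, hneq u j ?_ hj⟩
        rw [hru]
        simp [Finsupp.filter_apply, Ne.symm hij]
      have hyx : mlt y x := by
        refine ⟨⟨u, by rw [add_comm]; exact hxuy⟩, hneq y i ?_ hi⟩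
        rw [hry]
        simp [Finsupp.filter_apply]
      have hq : q u + q y = q x := by rw [← hql, hxuy]
      have hqu : q u ≠ q x := (hmin u hux).2
      have hqy : q y ≠ q x := (hmin y hyx).2
      have := (key_lemma hR hq hqu hqy).1
      exact ht ⟨q u, this.symm⟩
    omega
  · -- ghost case
    intro _
    by_contra hcard
    have hlt : 2 < f.support.card := by omega
    obtain ⟨i, hi, j, hj, k, hk, hij, hik, hjk⟩ := Finset.two_lt_card.mp hlt
    set u : V := bV.repr.symm (f.filter (· = i)) with hu
    set v : V := bV.repr.symm (f.filter (· = j)) with hv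
    set y : V := bV.repr.symm (f.filter (fun l => l ≠ i ∧ l ≠ j)) with hy
    have hru : bV.repr u = f.filter (· = i) := by simp [hu]
    have hrv : bV.repr v = f.filter (· = j) := by simp [hv]
    have hry : bV.repr y = f.filter (fun l => l ≠ i ∧ l ≠ j) := by simp [hy]
    have hxuvy : u + v + y = x := by
      apply bV.repr.injective
      rw [map_add, map_add, hru, hrv, hry, ← hf]
      ext l
      by_cases hl1 : l = i
      · subst hl1; simp [Finsupp.filter_apply, hij]
      · by_cases hl2 : l = j <;>
          simp [Finsupp.filter_apply, hl1, hl2, Ne.symm hij]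
    -- coordinate facts
    have hui : bV.repr u i = f i := by rw [hru]; simp [Finsupp.filter_apply]
    have huj : bV.repr u j = 0 := by
      rw [hru]; simp [Finsupp.filter_apply, Ne.symm hij]
    have huk : bV.repr u k = 0 := by
      rw [hru]; simp [Finsupp.filter_apply, Ne.symm hik]
    have hvi : bV.repr v i = 0 := by
      rw [hrv]; simp [Finsupp.filter_apply, hij]
    have hvk : bV.repr v k = 0 := by
      rw [hrv]; simp [Finsupp.filter_apply, Ne.symm hjk]
    have hyi : bV.repr y i = 0 := by
      rw [hry]; simp [Finsupp.filter_apply]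
    have hyj : bV.repr y j = 0 := by
      rw [hry]; simp [Finsupp.filter_apply]
    -- strict minorants of x
    have hux : mlt u x :=
      ⟨⟨v + y, by rw [← add_assoc]; exact hxuvy⟩, hneq u j huj hj⟩
    have hvx : mlt v x :=
      ⟨⟨u + y, by rw [← add_assoc, add_comm v u]; exact hxuvy⟩,
        hneq v i hvi hi⟩
    have huvx : mlt (u + v) x :=
      ⟨⟨y, hxuvy⟩, hneq (u + v) k
        (by rw [map_add, Finsupp.add_apply, huk, hvk, add_zero]) hk⟩
    have huyx : mlt (u + y) x :=
      ⟨⟨v, by rw [add_right_comm]; exact hxuvy⟩,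
        hneq (u + y) j
          (by rw [map_add, Finsupp.add_apply, huj, hyj, add_zero]) hj⟩
    have hvyx : mlt (v + y) x :=
      ⟨⟨u, by rw [add_right_comm, add_comm v u]; exact hxuvy⟩,
        hneq (v + y) i
          (by rw [map_add, Finsupp.add_apply, hvi, hyi, add_zero]) hi⟩
    -- the q-values
    have hs1 : q u + (q v + q y) = q x := by
      rw [← hql v y, ← hql u (v + y), ← add_assoc, hxuvy]
    have hs2 : q v + (q u + q y) = q x := by
      rw [← hql u y, ← hql v (u + y), ← add_assoc, add_comm v u, hxuvy]
    have hqu : q u ≠ q x := (hmin u hux).2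
    have hqv : q v ≠ q x := (hmin v hvx).2
    have hquv : q u + q v ≠ q x := by
      have := (hmin (u + v) huvx).2; rwa [hql u v] at this
    have hquy : q u + q y ≠ q x := by
      have := (hmin (u + y) huyx).2; rwa [hql u y] at this
    have hqvy : q v + q y ≠ q x := by
      have := (hmin (v + y) hvyx).2; rwa [hql v y] at this
    have e1 : q x = eps R * q u := (key_lemma hR hs1 hqu hqvy).1
    have e2 : q x = eps R * q v := (key_lemma hR hs2 hqv hquy).1
    obtain ⟨-, -, h3⟩ := hR
    have : q u + q v = eps R * q v := h3 (q u) (q v) (by rw [← e1, ← e2])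
    rw [← e2] at this
    exact hquv this

end Supertrop
end

section
/- Let R be a tangible supertropical semiring (e·𝒯(R) = 𝒢(R)) with 𝒢(R) a cancellative monoid under multiplication, V a free R-module with base (ε_i)_{i∈I} where I = {1,…,n} and n ∈ {3,4}, and q a quadratic form on V. If x ∈ V is q-minimal with supp(x) = I, then q(x) ∈ 𝒢(R) (x is g-isotropic), and there exist subsets J, K ⊆ I with J ∪ K = I, |J| ≤ 2, |K| ≤ 2, such that x = x(J) ∨ x(K), both x(J) and x(K) are g-anisotropic and q-minimal, and e·q(x(J)) = e·q(x(K)) = e·q(x). -/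
open scoped Classical

namespace Supertrop

section MainAux

variable {R : Type*} [CommSemiring R]

theorem aux_ee (hR : IsSupertropical R) : eps R * eps R = eps R := by
  have h : eps R * eps R = eps R + eps R := by rw [eps]; ring
  rw [h, hR.1]

theorem aux_eidem (hR : IsSupertropical R) (a : R) : eps R * (eps R * a) = eps R * a := by
  rw [← mul_assoc, aux_ee hR]

theorem aux_addself (hR : IsSupertropical R) (a : R) : a + a = eps R * a := hR.2.2 a a rfl

theorem aux_eG (hR : IsSupertropical R) (htan : TangibleSSF R) {r : R} (hr : r ≠ 0) :
    eps R * r ∈ ghost R := by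
  by_cases h : r ∈ eSet R
  · obtain ⟨a, ha⟩ := h
    have h2 : eps R * r = r := by rw [← ha]; exact aux_eidem hR a
    rw [h2]; exact ⟨⟨a, ha⟩, hr⟩
  · rw [← htan]; exact ⟨r, h, rfl⟩

theorem aux_ene0 (hR : IsSupertropical R) (htan : TangibleSSF R) {r : R} (hr : r ≠ 0) :
    eps R * r ≠ 0 := (aux_eG hR htan hr).2

theorem aux_zsf (hR : IsSupertropical R) (htan : TangibleSSF R) {a c : R} (h : a + c = 0) :
    a = 0 ∧ c = 0 := by
  by_cases he : eps R * a = eps R * c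
  · have h2 : a + c = eps R * c := hR.2.2 a c he
    have hc : c = 0 := by
      by_contra hc0
      exact aux_ene0 hR htan hc0 (h2 ▸ h)
    refine ⟨?_, hc⟩
    rw [hc, add_zero] at h; exact h
  · rcases hR.2.1 a c he with h2 | h2
    · have ha : a = 0 := h2 ▸ h
      refine ⟨ha, ?_⟩; rw [ha, zero_add] at h; exact h
    · have hc : c = 0 := h2 ▸ h
      refine ⟨?_, hc⟩; rw [hc, add_zero] at h; exact h

theorem gle_trans {u v w : R} (h1 : gle u v) (h2 : gle v w) : gle u w := by
  unfold gle at *; rw [← h2, ← add_assoc, h1]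

theorem gle_antisymm {u v : R} (h1 : gle u v) (h2 : gle v u) : u = v := by
  unfold gle at *; rw [← h1, add_comm]; exact h2.symm

theorem gle_mul {u v : R} (h : gle u v) (s : R) : gle (u * s) (v * s) := by
  unfold gle at *; rw [← add_mul, h]

theorem gle_mul_left {u v : R} (h : gle u v) (s : R) : gle (s * u) (s * v) := by
  unfold gle at *; rw [← mul_add, h]

theorem gle_E_of_mle (hR : IsSupertropical R) {a c : R} (h : mle a c) :
    gle (eps R * a) (eps R * c) := by
  obtain ⟨z, hz⟩ := h
  unfold gle
  have h2 : eps R * a + eps R * c = (eps R * a + eps R * a) + eps R * z := by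
    rw [← hz]; ring
  rw [h2, aux_addself hR (eps R * a), aux_eidem hR, ← mul_add, hz]

theorem aux_absorb (hR : IsSupertropical R) {a c : R}
    (hle : gle (eps R * a) (eps R * c)) (hne : eps R * a ≠ eps R * c) : a + c = c := by
  rcases hR.2.1 a c hne with h | h
  · exfalso
    apply hne
    have h2 : eps R * a + eps R * c = eps R * a := by rw [← mul_add, h]
    rw [hle] at h2
    exact h2.symm
  · exact h

theorem aux_ghost_absorb (hR : IsSupertropical R) {M r : R} (hM : eps R * M = M)
    (h : gle (eps R * r) M) : M + r = M := by
  by_cases he : eps R * r = eps R * M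
  · have h2 : r + M = eps R * M := hR.2.2 r M he
    rw [add_comm] at h2; rw [h2, hM]
  · rw [add_comm]
    exact aux_absorb hR (by rw [hM]; exact h) (by rw [hM]; exact fun hc => he (by rw [hc, hM]))

theorem gle_sum {ι : Type*} {s : Finset ι} {f : ι → R} {w : R}
    (h : ∀ t ∈ s, gle (f t) w) : gle (∑ t ∈ s, f t) w := by
  classical
  induction s using Finset.induction_on with
  | empty => show (0:R) + w = w; exact zero_add w
  | @insert a s' ha ih =>
    rw [Finset.sum_insert ha]
    have h1 : gle (f a) w := h a (Finset.mem_insert_self a s')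
    have h2 : gle (∑ t ∈ s', f t) w := ih (fun t ht => h t (Finset.mem_insert_of_mem ht))
    unfold gle at *
    rw [add_assoc, h2, h1]

theorem aux_sum_absorb (hR : IsSupertropical R) {ι : Type*} {M : R} (hM : eps R * M = M)
    {s : Finset ι} {f : ι → R} (h : ∀ t ∈ s, gle (eps R * f t) M) :
    M + ∑ t ∈ s, f t = M := by
  classical
  induction s using Finset.induction_on with
  | empty => simp
  | @insert a s' ha ih =>
    rw [Finset.sum_insert ha, ← add_assoc,
      aux_ghost_absorb hR hM (h a (Finset.mem_insert_self a s'))]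
    exact ih (fun t ht => h t (Finset.mem_insert_of_mem ht))

theorem aux_ghost_sum_mem (hR : IsSupertropical R) {ι : Type*} (s : Finset ι) (g : ι → R)
    (hg : ∀ t, eps R * g t = g t) :
    (∑ t ∈ s, g t) = 0 ∨ ∃ t ∈ s, (∑ t ∈ s, g t) = g t := by
  classical
  induction s using Finset.induction_on with
  | empty => exact Or.inl rfl
  | @insert a s' ha ih =>
    rw [Finset.sum_insert ha]
    rcases ih with h0 | ⟨t, ht, hsum⟩
    · rw [h0, add_zero]
      exact Or.inr ⟨a, Finset.mem_insert_self a s', rfl⟩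
    · rw [hsum]
      by_cases he : eps R * g a = eps R * g t
      · have h2 : g a + g t = eps R * g t := hR.2.2 _ _ he
        rw [h2, hg t]
        exact Or.inr ⟨t, Finset.mem_insert_of_mem ht, rfl⟩
      · rcases hR.2.1 _ _ he with h2 | h2
        · rw [h2]; exact Or.inr ⟨a, Finset.mem_insert_self a s', rfl⟩
        · rw [h2]; exact Or.inr ⟨t, Finset.mem_insert_of_mem ht, rfl⟩

theorem aux_gle_term_sum (hR : IsSupertropical R) {ι : Type*} {s : Finset ι} {g : ι → R}
    (hg : ∀ t, eps R * g t = g t) {t : ι} (ht : t ∈ s) : gle (g t) (∑ u ∈ s, g u) := by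
  classical
  show g t + ∑ u ∈ s, g u = ∑ u ∈ s, g u
  rw [← Finset.add_sum_erase _ g ht, ← add_assoc, aux_addself hR (g t), hg t]

theorem aux_sq_cancel (hcanc : ∀ g ∈ ghost R, ∀ a ∈ ghost R, ∀ c ∈ ghost R, g * a = g * c → a = c)
    {a c : R} (ha : a ∈ ghost R) (hc : c ∈ ghost R) (hle : gle a c) (hne : a ≠ c) :
    a * a ≠ c * c := by
  intro h
  have h1 : gle (a * a) (a * c) := by
    have h0 := gle_mul hle a; rwa [mul_comm c a] at h0
  have h2 : gle (a * c) (c * c) := gle_mul hle c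
  rw [← h] at h2
  have h3 : a * a = a * c := gle_antisymm h1 h2
  exact hne (hcanc a ha a ha c hc h3)

theorem aux_lt_tan (hR : IsSupertropical R) {a t : R} (ht : t ∉ eSet R)
    (hle : mle a t) (hne : a ≠ t) :
    gle (eps R * a) (eps R * t) ∧ eps R * a ≠ eps R * t := by
  obtain ⟨z, hz⟩ := hle
  by_cases h1 : eps R * a = eps R * z
  · have h2 : t = eps R * z := by rw [← hz]; exact hR.2.2 a z h1
    exact absurd ⟨z, h2.symm⟩ ht
  · rcases hR.2.1 a z h1 with h2 | h2
    · exact absurd (h2 ▸ hz) hne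
    · have htz : t = z := h2 ▸ hz.symm
      have hat : a + t = t := by rw [htz]; exact h2
      constructor
      · show eps R * a + eps R * t = eps R * t
        rw [← mul_add, hat]
      · intro heq
        have h3 : a + t = eps R * t := hR.2.2 a t heq
        rw [hat] at h3
        exact ht ⟨t, h3.symm⟩

end MainAux

section QuadAux

variable {R : Type*} [CommSemiring R] {V : Type*} [AddCommMonoid V] [Module R V]
variable {q : V → R} {b : V → V → R}

theorem aux_b0 (hqp : IsQuadPair q b) (y : V) : b 0 y = 0 := by
  have h := hqp.2.2.2.1 0 y y
  rw [zero_smul, zero_mul] at h; exact h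

theorem aux_q0 (hqp : IsQuadPair q b) : q 0 = 0 := by
  have h := hqp.1 0 0
  rw [zero_smul] at h
  simpa using h

theorem aux_bsum (hqp : IsQuadPair q b) {ι : Type*} (s : Finset ι) (v : ι → V) (y : V) :
    b (∑ i ∈ s, v i) y = ∑ i ∈ s, b (v i) y := by
  classical
  induction s using Finset.induction_on with
  | empty => simpa using aux_b0 hqp y
  | @insert a s' ha ih => rw [Finset.sum_insert ha, hqp.2.2.1, ih, Finset.sum_insert ha]

theorem aux_qsum (hqp : IsQuadPair q b) {ι : Type*} [LinearOrder ι] (s : Finset ι) (v : ι → V) :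
    q (∑ i ∈ s, v i) =
      ∑ i ∈ s, ∑ j ∈ s,
        (if i = j then q (v i) else if j < i then b (v i) (v j) else 0) := by
  classical
  induction s using Finset.induction_on with
  | empty => simpa using aux_q0 hqp
  | @insert a s' ha ih =>
    set F : ι → ι → R :=
      fun i j => if i = j then q (v i) else if j < i then b (v i) (v j) else 0 with hF
    have hRHS : ∑ i ∈ insert a s', ∑ j ∈ insert a s', F i j
        = (F a a + ∑ j ∈ s', F a j) + (∑ i ∈ s', F i a + ∑ i ∈ s', ∑ j ∈ s', F i j) := by
      calc ∑ i ∈ insert a s', ∑ j ∈ insert a s', F i j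
          = ∑ j ∈ insert a s', F a j + ∑ i ∈ s', ∑ j ∈ insert a s', F i j :=
            Finset.sum_insert ha
        _ = (F a a + ∑ j ∈ s', F a j) + ∑ i ∈ s', (F i a + ∑ j ∈ s', F i j) := by
            rw [Finset.sum_insert ha]
            congr 1
            exact Finset.sum_congr rfl fun i _ => Finset.sum_insert ha
        _ = (F a a + ∑ j ∈ s', F a j) + (∑ i ∈ s', F i a + ∑ i ∈ s', ∑ j ∈ s', F i j) := by
            rw [Finset.sum_add_distrib]
    have hb : b (v a) (∑ i ∈ s', v i) = ∑ j ∈ s', b (v a) (v j) := by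
      rw [hqp.2.1, aux_bsum hqp]
      exact Finset.sum_congr rfl fun j _ => hqp.2.1 (v j) (v a)
    have hsplit : ∑ j ∈ s', b (v a) (v j) = ∑ j ∈ s', F a j + ∑ j ∈ s', F j a := by
      rw [← Finset.sum_add_distrib]
      refine Finset.sum_congr rfl fun j hj => ?_
      have hne : a ≠ j := fun h => ha (h ▸ hj)
      rcases lt_or_gt_of_ne hne with hlt | hlt
      · have h1 : F a j = 0 := by
          simp only [hF]
          rw [if_neg hne, if_neg (by exact not_lt.2 hlt.le)]
        have h2 : F j a = b (v j) (v a) := by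
          simp only [hF]
          rw [if_neg hne.symm, if_pos hlt]
        rw [h1, h2, zero_add]
        exact hqp.2.1 (v a) (v j)
      · have h1 : F a j = b (v a) (v j) := by
          simp only [hF]
          rw [if_neg hne, if_pos hlt]
        have h2 : F j a = 0 := by
          simp only [hF]
          rw [if_neg hne.symm, if_neg (by exact not_lt.2 hlt.le)]
        rw [h1, h2, add_zero]
    have hFaa : F a a = q (v a) := by simp [hF]
    rw [Finset.sum_insert ha, hqp.2.2.2.2, ih, hb, hsplit, hRHS, hFaa]
    ring

theorem aux_rsup_self (a : R) : rsup a a = a := by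
  unfold rsup; rw [if_pos rfl]

theorem aux_rsup_zero {a : R} (h : a ≠ 0) : rsup a 0 = a := by
  unfold rsup; rw [if_neg h, add_zero]

theorem aux_zero_rsup {a : R} (h : a ≠ 0) : rsup 0 a = a := by
  unfold rsup; rw [if_neg (Ne.symm h), zero_add]

end QuadAux

/-- a `q`-minimal vector of full support in rank `3` or `4` is
`g`-isotropic and is the maximum of two `g`-anisotropic `q`-minimal vectors of
small support with the same ghost `q`-value. -/
theorem stmt17 {R : Type*} [CommSemiring R] (hR : IsSupertropical R)
    (htan : TangibleSSF R) (hid : eps R ∈ ghost R)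
    (hmul : ∀ g ∈ ghost R, ∀ h ∈ ghost R, g * h ∈ ghost R)
    (hcanc : ∀ g ∈ ghost R, ∀ a ∈ ghost R, ∀ c ∈ ghost R, g * a = g * c → a = c)
    {V : Type*} [AddCommMonoid V] [Module R V]
    (n : ℕ) (hn : n = 3 ∨ n = 4) (bV : Module.Basis (Fin n) R V)
    (q : V → R) (hq : IsQuadForm q)
    (x : V) (hmin : QMinimal q x) (hsupp : (bV.repr x).support = Finset.univ) :
    q x ∈ ghost R ∧
    ∃ J K : Finset (Fin n), J ∪ K = Finset.univ ∧ J.card ≤ 2 ∧ K.card ≤ 2 ∧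
      x = vsup bV (restrict bV x J) (restrict bV x K) ∧
      restrict bV x J ≠ 0 ∧ restrict bV x K ≠ 0 ∧
      q (restrict bV x J) ∈ tangible R ∧ q (restrict bV x K) ∈ tangible R ∧
      QMinimal q (restrict bV x J) ∧ QMinimal q (restrict bV x K) ∧
      eps R * q (restrict bV x J) = eps R * q x ∧
      eps R * q (restrict bV x K) = eps R * q x := by
  classical
  obtain ⟨b, hqp⟩ := hq
  have hn3 : 3 ≤ n := by rcases hn with h | h <;> omega
  have hcne : ∀ i : Fin n, bV.repr x i ≠ 0 := fun i =>
    Finsupp.mem_support_iff.1 (hsupp ▸ Finset.mem_univ i)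
  -- the terms of the expansion of q x
  set F : Fin n × Fin n → R := fun p =>
    if p.1 = p.2 then q (bV.repr x p.1 • bV p.1)
    else if p.2 < p.1 then b (bV.repr x p.1 • bV p.1) (bV.repr x p.2 • bV p.2) else 0 with hF
  have hQ : ∀ J : Finset (Fin n), q (restrict bV x J) = ∑ t ∈ J ×ˢ J, F t := by
    intro J
    rw [show restrict bV x J = ∑ i ∈ J, (fun i => bV.repr x i • bV i) i from rfl,
      aux_qsum hqp, Finset.sum_product]
  have hres_univ : restrict bV x Finset.univ = x := Module.Basis.sum_repr bV x
  have hQx : q x = ∑ t ∈ Finset.univ ×ˢ Finset.univ, F t := by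
    rw [← hres_univ, hQ]
  have hrestr_repr : ∀ (J : Finset (Fin n)) (i : Fin n),
      bV.repr (restrict bV x J) i = if i ∈ J then bV.repr x i else 0 := by
    intro J i
    rw [show restrict bV x J = ∑ j ∈ J, bV.repr x j • bV j from rfl, map_sum]
    rw [Finsupp.finset_sum_apply]
    have h1 : ∀ j : Fin n, (bV.repr (bV.repr x j • bV j)) i
        = if j = i then bV.repr x j else 0 := by
      intro j
      rw [map_smul, Module.Basis.repr_self]
      simp [Finsupp.single_apply]
    rw [Finset.sum_congr rfl fun j _ => h1 j, Finset.sum_ite_eq' J i (fun j => bV.repr x j)]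
  have hmlt_res : ∀ J : Finset (Fin n), J ≠ Finset.univ → mlt (restrict bV x J) x := by
    intro J hJ
    constructor
    · refine ⟨∑ i ∈ Jᶜ, bV.repr x i • bV i, ?_⟩
      rw [show restrict bV x J = ∑ i ∈ J, bV.repr x i • bV i from rfl,
        Finset.sum_add_sum_compl]
      exact Module.Basis.sum_repr bV x
    · intro heq
      obtain ⟨i, hi⟩ : ∃ i, i ∉ J := by
        by_contra h; push_neg at h
        exact hJ (Finset.eq_univ_iff_forall.2 h)
      have h2 := congrArg (fun y => bV.repr y i) heq
      rw [hrestr_repr J i, if_neg hi] at h2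
      exact hcne i h2.symm
  have hne_q : ∀ J : Finset (Fin n), J ≠ Finset.univ → q (restrict bV x J) ≠ q x :=
    fun J hJ => (hmin _ (hmlt_res J hJ)).2
  have hx0 : x ≠ 0 := by
    intro h
    apply hcne ⟨0, by omega⟩
    rw [h, map_zero]; rfl
  have hqx0 : q x ≠ 0 := by
    intro h
    have h0 := hmin 0 ⟨⟨x, zero_add x⟩, fun hh => hx0 hh.symm⟩
    exact h0.2 ((aux_q0 hqp).trans h.symm)
  set M : R := eps R * q x with hM
  have hM0 : M ≠ 0 := aux_ene0 hR htan hqx0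
  have hMM : eps R * M = M := aux_eidem hR _
  have hMsum : M = ∑ t ∈ Finset.univ ×ˢ Finset.univ, eps R * F t := by
    rw [hM, hQx, Finset.mul_sum]
  have hgleM : ∀ p : Fin n × Fin n, gle (eps R * F p) M := by
    intro p
    rw [hMsum]
    exact aux_gle_term_sum hR (fun t => aux_eidem hR _)
      (Finset.mem_product.2 ⟨Finset.mem_univ _, Finset.mem_univ _⟩)
  have hcard : ∀ p : Fin n × Fin n, (insert p.1 ({p.2} : Finset (Fin n))).card ≤ 2 := by
    intro p
    calc (insert p.1 ({p.2} : Finset (Fin n))).card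
        ≤ ({p.2} : Finset (Fin n)).card + 1 := Finset.card_insert_le _ _
      _ = 2 := by rw [Finset.card_singleton]
  have hproper : ∀ J : Finset (Fin n), J.card ≤ 2 → J ≠ Finset.univ := by
    intro J hJ heq
    rw [heq, Finset.card_univ, Fintype.card_fin] at hJ
    omega
  -- dominant-term collapse
  have hdom : ∀ (s : Finset (Fin n × Fin n)) (p : Fin n × Fin n), p ∈ s →
      (∀ t ∈ s, t ≠ p → eps R * F t ≠ M) → eps R * F p = M → ∑ t ∈ s, F t = F p := by
    intro s p hp hnc hcrit
    rw [← Finset.add_sum_erase s F hp]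
    have hle : gle (eps R * ∑ t ∈ s.erase p, F t) (eps R * F p) := by
      rw [Finset.mul_sum, hcrit]
      exact gle_sum (fun t _ => hgleM t)
    have hne : eps R * ∑ t ∈ s.erase p, F t ≠ eps R * F p := by
      rw [hcrit, Finset.mul_sum]
      rcases aux_ghost_sum_mem hR (s.erase p) (fun t => eps R * F t)
        (fun t => aux_eidem hR _) with h0 | ⟨t, ht, hts⟩
      · rw [h0]; exact fun h => hM0 h.symm
      · rw [hts]
        exact hnc t (Finset.mem_of_mem_erase ht) (Finset.ne_of_mem_erase ht)
    have h2 := aux_absorb hR hle hne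
    rw [add_comm] at h2
    rw [h2]
  -- two criticals collapse to M
  have hcollapse : ∀ (s : Finset (Fin n × Fin n)) (p p' : Fin n × Fin n), p ∈ s → p' ∈ s →
      p ≠ p' → eps R * F p = M → eps R * F p' = M → ∑ t ∈ s, F t = M := by
    intro s p p' hp hp' hne hcp hcp'
    have hp'e : p' ∈ s.erase p := Finset.mem_erase.2 ⟨Ne.symm hne, hp'⟩
    rw [← Finset.add_sum_erase s F hp, ← Finset.add_sum_erase _ F hp'e, ← add_assoc]
    have h2 : F p + F p' = M := by
      rw [hR.2.2 (F p) (F p') (hcp.trans hcp'.symm), hcp']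
    rw [h2]
    exact aux_sum_absorb hR hMM (fun t _ => hgleM t)
  -- there exist two distinct critical terms
  have h2crit : ∃ p p' : Fin n × Fin n, p ≠ p' ∧ eps R * F p = M ∧ eps R * F p' = M := by
    have hex : ∃ p, eps R * F p = M := by
      rcases aux_ghost_sum_mem hR (Finset.univ ×ˢ Finset.univ) (fun t => eps R * F t)
        (fun t => aux_eidem hR _) with h0 | ⟨t, _, hts⟩
      · exact absurd (hMsum.trans h0) hM0
      · exact ⟨t, (hMsum.trans hts).symm⟩
    obtain ⟨p, hp⟩ := hex
    by_cases huniq : ∀ t : Fin n × Fin n, eps R * F t = M → t = p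
    · exfalso
      have hmem : p ∈ (insert p.1 {p.2}) ×ˢ (insert p.1 ({p.2} : Finset (Fin n))) :=
        Finset.mem_product.2 ⟨Finset.mem_insert_self _ _,
          Finset.mem_insert_of_mem (Finset.mem_singleton_self _)⟩
      have hsub : q (restrict bV x (insert p.1 {p.2})) = F p := by
        rw [hQ]
        exact hdom _ p hmem (fun t _ htne hc => htne (huniq t hc)) hp
      have hqxp : q x = F p := by
        rw [hQx]
        exact hdom _ p (Finset.mem_product.2 ⟨Finset.mem_univ _, Finset.mem_univ _⟩)
          (fun t _ htne hc => htne (huniq t hc)) hp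
      exact hne_q _ (hproper _ (hcard p)) (hsub.trans hqxp.symm)
    · push_neg at huniq
      obtain ⟨t, ht, htp⟩ := huniq
      exact ⟨t, p, htp, ht, hp⟩
  obtain ⟨p, p', hpp, hp, hp'⟩ := h2crit
  have hqxM : q x = M := by
    rw [hQx]
    exact hcollapse _ p p'
      (Finset.mem_product.2 ⟨Finset.mem_univ _, Finset.mem_univ _⟩)
      (Finset.mem_product.2 ⟨Finset.mem_univ _, Finset.mem_univ _⟩) hpp hp hp'
  -- any two distinct critical terms cover everything
  have hcover : ∀ t t' : Fin n × Fin n, t ≠ t' → eps R * F t = M → eps R * F t' = M →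
      insert t.1 {t.2} ∪ insert t'.1 {t'.2} = (Finset.univ : Finset (Fin n)) := by
    intro t t' htne hct hct'
    by_contra hU
    set S := insert t.1 {t.2} ∪ insert t'.1 ({t'.2} : Finset (Fin n)) with hS
    have hmem1 : t ∈ S ×ˢ S := by
      refine Finset.mem_product.2 ⟨?_, ?_⟩ <;>
        · rw [hS]
          refine Finset.mem_union_left _ ?_
          first
            | exact Finset.mem_insert_self _ _
            | exact Finset.mem_insert_of_mem (Finset.mem_singleton_self _)
    have hmem2 : t' ∈ S ×ˢ S := by
      refine Finset.mem_product.2 ⟨?_, ?_⟩ <;>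
        · rw [hS]
          refine Finset.mem_union_right _ ?_
          first
            | exact Finset.mem_insert_self _ _
            | exact Finset.mem_insert_of_mem (Finset.mem_singleton_self _)
    have h2 : q (restrict bV x S) = M := by
      rw [hQ]
      exact hcollapse _ t t' hmem1 hmem2 htne hct hct'
    exact hne_q S hU (h2.trans hqxM.symm)
  -- inside a critical 2-set, the critical term is the only one at level M
  have hKeyJ : ∀ p₀ : Fin n × Fin n, eps R * F p₀ = M →
      ∀ t : Fin n × Fin n, t.1 ∈ insert p₀.1 ({p₀.2} : Finset (Fin n)) →
        t.2 ∈ insert p₀.1 ({p₀.2} : Finset (Fin n)) → t ≠ p₀ → eps R * F t ≠ M := by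
    intro p₀ hp₀ t ht1 ht2 htne hcrit
    have hcov := hcover t p₀ htne hcrit hp₀
    have hsub : insert t.1 {t.2} ∪ insert p₀.1 {p₀.2} ⊆ insert p₀.1 ({p₀.2} : Finset (Fin n)) := by
      intro i hi
      rcases Finset.mem_union.1 hi with h | h
      · rcases Finset.mem_insert.1 h with h2 | h2
        · rw [h2]; exact ht1
        · rw [Finset.mem_singleton.1 h2]; exact ht2
      · exact h
    rw [hcov] at hsub
    have hcle : (Finset.univ : Finset (Fin n)).card ≤ (insert p₀.1 ({p₀.2} : Finset (Fin n))).card :=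
      Finset.card_le_card hsub
    rw [Finset.card_univ, Fintype.card_fin] at hcle
    have := hcard p₀
    omega
  -- value of q on a critical restriction
  have hQJ : ∀ p₀ : Fin n × Fin n, eps R * F p₀ = M →
      q (restrict bV x (insert p₀.1 {p₀.2})) = F p₀ := by
    intro p₀ hp₀
    rw [hQ]
    refine hdom _ p₀ (Finset.mem_product.2 ⟨Finset.mem_insert_self _ _,
      Finset.mem_insert_of_mem (Finset.mem_singleton_self _)⟩) ?_ hp₀
    intro t ht htne
    have := Finset.mem_product.1 ht
    exact hKeyJ p₀ hp₀ t this.1 this.2 htne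
  -- critical terms are tangible
  have htangJ : ∀ p₀ : Fin n × Fin n, eps R * F p₀ = M → F p₀ ∉ eSet R := by
    intro p₀ hp₀ hFe
    obtain ⟨a, ha⟩ := hFe
    have h2 : F p₀ = M := by
      rw [← hp₀, ← ha, aux_eidem hR]
    exact hne_q _ (hproper _ (hcard p₀)) (((hQJ p₀ hp₀).trans h2).trans hqxM.symm)
  -- shapes of critical terms
  have hshape : ∀ p₀ : Fin n × Fin n, eps R * F p₀ = M → p₀.1 = p₀.2 ∨ p₀.2 < p₀.1 := by
    intro p₀ hp₀
    by_contra h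
    push_neg at h
    have hzero : F p₀ = 0 := by
      rw [hF]
      simp only
      rw [if_neg h.1, if_neg (not_lt.2 h.2)]
    rw [hzero, mul_zero] at hp₀
    exact hM0 hp₀.symm
  -- explicit form of the terms
  have hE2 : ∀ u w : R, (eps R * u) * (eps R * w) = eps R * (u * w) := by
    intro u w
    rw [mul_mul_mul_comm, aux_ee hR]
  have hFdiag : ∀ t : Fin n × Fin n, t.1 = t.2 →
      F t = (bV.repr x t.1) ^ 2 * q (bV t.1) := by
    intro t h
    rw [hF]; simp only
    rw [if_pos h, hqp.1]
  have hFoff : ∀ t : Fin n × Fin n, t.1 ≠ t.2 → t.2 < t.1 →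
      F t = bV.repr x t.1 * (bV.repr x t.2 * b (bV t.1) (bV t.2)) := by
    intro t h1 h2
    rw [hF]; simp only
    rw [if_neg h1, if_pos h2, hqp.2.2.2.1]
    congr 1
    rw [hqp.2.1, hqp.2.2.2.1]
    congr 1
    exact hqp.2.1 _ _
  -- coordinates of critical terms are tangible
  have hct : ∀ p₀ : Fin n × Fin n, eps R * F p₀ = M →
      ∀ i ∈ insert p₀.1 ({p₀.2} : Finset (Fin n)), bV.repr x i ∉ eSet R := by
    intro p₀ hp₀ i hi hie
    obtain ⟨a, ha⟩ := hie
    apply htangJ p₀ hp₀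
    have hi2 : i = p₀.1 ∨ i = p₀.2 := by
      rcases Finset.mem_insert.1 hi with h | h
      · exact Or.inl h
      · exact Or.inr (Finset.mem_singleton.1 h)
    rcases hshape p₀ hp₀ with hsh | hsh
    · have hi1 : i = p₀.1 := by
        rcases hi2 with h | h
        · exact h
        · rw [h, ← hsh]
      refine ⟨a * (eps R * a) * q (bV p₀.1), ?_⟩
      rw [hFdiag p₀ hsh, ← hi1, ← ha]; ring
    · have hne12 : p₀.1 ≠ p₀.2 := ne_of_gt hsh
      rcases hi2 with h | h
      · refine ⟨a * (bV.repr x p₀.2 * b (bV p₀.1) (bV p₀.2)), ?_⟩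
        rw [hFoff p₀ hne12 hsh, ← h, ← ha]; ring
      · refine ⟨bV.repr x p₀.1 * a * b (bV p₀.1) (bV p₀.2), ?_⟩
        rw [hFoff p₀ hne12 hsh, ← h, ← ha]; ring
  -- q-minimality of critical restrictions
  have hQmin : ∀ p₀ : Fin n × Fin n, eps R * F p₀ = M →
      QMinimal q (restrict bV x (insert p₀.1 {p₀.2})) := by
    intro p₀ hp₀
    set J₀ := insert p₀.1 ({p₀.2} : Finset (Fin n)) with hJ₀
    intro x' hx'
    obtain ⟨⟨w, hw⟩, hne'⟩ := hx'
    have hco : ∀ i, bV.repr x' i + bV.repr w i = bV.repr (restrict bV x J₀) i := by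
      intro i
      rw [← Finsupp.add_apply, ← map_add, hw]
    have hx'0 : ∀ i, i ∉ J₀ → bV.repr x' i = 0 := by
      intro i hi
      have h := hco i
      rw [hrestr_repr J₀ i, if_neg hi] at h
      exact (aux_zsf hR htan h).1
    have hxle : ∀ i ∈ J₀, mle (bV.repr x' i) (bV.repr x i) := by
      intro i hi
      exact ⟨bV.repr w i, by rw [hco i, hrestr_repr J₀ i, if_pos hi]⟩
    have hdiff : ∃ j ∈ J₀, bV.repr x' j ≠ bV.repr x j := by
      by_contra h
      push_neg at h
      apply hne'
      apply bV.repr.injective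
      ext i
      rw [hrestr_repr J₀ i]
      by_cases hi : i ∈ J₀
      · rw [if_pos hi]; exact h i hi
      · rw [if_neg hi]; exact hx'0 i hi
    obtain ⟨j, hjJ, hjne⟩ := hdiff
    constructor
    · exact ⟨q w + b x' w, by rw [← hw, hqp.2.2.2.2, ← add_assoc]⟩
    · intro hqeq
      have hx'sum : x' = ∑ i ∈ J₀, bV.repr x' i • bV i := by
        have h1 : x' = ∑ i ∈ Finset.univ, bV.repr x' i • bV i := (Module.Basis.sum_repr bV x').symm
        conv_lhs => rw [h1]
        exact (Finset.sum_subset (Finset.subset_univ J₀)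
          (fun i _ hi => by rw [hx'0 i hi, zero_smul])).symm
      set F' : Fin n × Fin n → R := fun t =>
        if t.1 = t.2 then q (bV.repr x' t.1 • bV t.1)
        else if t.2 < t.1 then b (bV.repr x' t.1 • bV t.1) (bV.repr x' t.2 • bV t.2)
        else 0 with hF'
      have hQ' : q x' = ∑ t ∈ J₀ ×ˢ J₀, F' t := by
        rw [show x' = ∑ i ∈ J₀, (fun i => bV.repr x' i • bV i) i from hx'sum,
          aux_qsum hqp, Finset.sum_product]
      have hlvlD : ∀ u s : R,
          eps R * (u ^ 2 * s) = (eps R * u) * ((eps R * u) * (eps R * s)) := by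
        intro u s
        rw [hE2, hE2]; ring
      have hlvlO : ∀ u w' s : R,
          eps R * (u * (w' * s)) = (eps R * u) * ((eps R * w') * (eps R * s)) := by
        intro u w' s
        rw [hE2, hE2]
      have hF'diag : ∀ t : Fin n × Fin n, t.1 = t.2 →
          F' t = (bV.repr x' t.1) ^ 2 * q (bV t.1) := by
        intro t h
        rw [hF']; simp only
        rw [if_pos h, hqp.1]
      have hF'off : ∀ t : Fin n × Fin n, t.1 ≠ t.2 → t.2 < t.1 →
          F' t = bV.repr x' t.1 * (bV.repr x' t.2 * b (bV t.1) (bV t.2)) := by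
        intro t h1 h2
        rw [hF']; simp only
        rw [if_neg h1, if_pos h2, hqp.2.2.2.1]
        congr 1
        rw [hqp.2.1, hqp.2.2.2.1]
        congr 1
        exact hqp.2.1 _ _
      have hjJ' : j ∈ insert p₀.1 ({p₀.2} : Finset (Fin n)) := by rw [← hJ₀]; exact hjJ
      have hterm : ∀ t ∈ J₀ ×ˢ J₀, eps R * F' t ≠ M := by
        intro t ht
        have ht1 : t.1 ∈ J₀ := (Finset.mem_product.1 ht).1
        have ht2 : t.2 ∈ J₀ := (Finset.mem_product.1 ht).2
        have ht1' : t.1 ∈ insert p₀.1 ({p₀.2} : Finset (Fin n)) := by rw [← hJ₀]; exact ht1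
        have ht2' : t.2 ∈ insert p₀.1 ({p₀.2} : Finset (Fin n)) := by rw [← hJ₀]; exact ht2
        by_cases h12 : t.1 = t.2
        · -- diagonal term
          have hFt : F t = (bV.repr x t.1) ^ 2 * q (bV t.1) := hFdiag t h12
          have hF't : F' t = (bV.repr x' t.1) ^ 2 * q (bV t.1) := hF'diag t h12
          by_cases h0 : bV.repr x' t.1 = 0
          · rw [hF't, h0]
            intro hh
            apply hM0
            rw [← hh]; ring
          · have hmle1 : mle (bV.repr x' t.1) (bV.repr x t.1) := hxle t.1 ht1
            have hgle1 : gle (eps R * bV.repr x' t.1) (eps R * bV.repr x t.1) :=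
              gle_E_of_mle hR hmle1
            have hgleF : gle (eps R * F' t) (eps R * F t) := by
              rw [hFt, hF't, hlvlD, hlvlD]
              exact gle_trans (gle_mul_left (gle_mul hgle1 _) _) (gle_mul hgle1 _)
            by_cases htp : t = p₀
            · have hj1 : j = t.1 := by
                rcases Finset.mem_insert.1 hjJ' with h | h
                · rw [h, htp]
                · rw [Finset.mem_singleton.1 h, htp]
                  rw [htp] at h12
                  exact h12.symm
              have hjne1 : bV.repr x' t.1 ≠ bV.repr x t.1 := by rw [← hj1]; exact hjne
              have htanc : bV.repr x t.1 ∉ eSet R := hct p₀ hp₀ t.1 ht1'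
              have hstrict := aux_lt_tan hR htanc hmle1 hjne1
              have hEFt : eps R * F t = M := by rw [htp]; exact hp₀
              have hs0 : q (bV t.1) ≠ 0 := by
                intro hs
                apply hM0
                rw [← hEFt, hFt, hs, mul_zero, mul_zero]
              intro hcontra
              have hG1 : eps R * bV.repr x' t.1 ∈ ghost R := aux_eG hR htan h0
              have hG2 : eps R * bV.repr x t.1 ∈ ghost R := aux_eG hR htan (hcne t.1)
              have hGs : eps R * q (bV t.1) ∈ ghost R := aux_eG hR htan hs0
              have hEe : (eps R * bV.repr x' t.1) *
                    ((eps R * bV.repr x' t.1) * (eps R * q (bV t.1)))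
                  = (eps R * bV.repr x t.1) *
                    ((eps R * bV.repr x t.1) * (eps R * q (bV t.1))) := by
                rw [← hlvlD, ← hlvlD, ← hFt, ← hF't, hcontra, hEFt]
              have hc2 : (eps R * bV.repr x' t.1) * (eps R * bV.repr x' t.1)
                  = (eps R * bV.repr x t.1) * (eps R * bV.repr x t.1) := by
                apply hcanc _ hGs _ (hmul _ hG1 _ hG1) _ (hmul _ hG2 _ hG2)
                calc eps R * q (bV t.1) *
                      ((eps R * bV.repr x' t.1) * (eps R * bV.repr x' t.1))
                    = (eps R * bV.repr x' t.1) *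
                      ((eps R * bV.repr x' t.1) * (eps R * q (bV t.1))) := by ring
                  _ = (eps R * bV.repr x t.1) *
                      ((eps R * bV.repr x t.1) * (eps R * q (bV t.1))) := hEe
                  _ = eps R * q (bV t.1) *
                      ((eps R * bV.repr x t.1) * (eps R * bV.repr x t.1)) := by ring
              exact aux_sq_cancel hcanc hG1 hG2 hstrict.1 hstrict.2 hc2
            · have hnc : eps R * F t ≠ M := hKeyJ p₀ hp₀ t ht1' ht2' htp
              intro hcontra
              apply hnc
              exact gle_antisymm (hgleM t) (by rw [← hcontra]; exact hgleF)
        · by_cases h21 : t.2 < t.1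
          · -- off-diagonal term
            have hFt := hFoff t h12 h21
            have hF't := hF'off t h12 h21
            by_cases h01 : bV.repr x' t.1 = 0
            · rw [hF't, h01]
              intro hh
              apply hM0
              rw [← hh]; ring
            by_cases h02 : bV.repr x' t.2 = 0
            · rw [hF't, h02]
              intro hh
              apply hM0
              rw [← hh]; ring
            have hmle1 : mle (bV.repr x' t.1) (bV.repr x t.1) := hxle t.1 ht1
            have hmle2 : mle (bV.repr x' t.2) (bV.repr x t.2) := hxle t.2 ht2
            have hgle1 : gle (eps R * bV.repr x' t.1) (eps R * bV.repr x t.1) :=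
              gle_E_of_mle hR hmle1
            have hgle2 : gle (eps R * bV.repr x' t.2) (eps R * bV.repr x t.2) :=
              gle_E_of_mle hR hmle2
            have hgleF : gle (eps R * F' t) (eps R * F t) := by
              rw [hFt, hF't, hlvlO, hlvlO]
              exact gle_trans (gle_mul_left (gle_mul hgle2 _) _) (gle_mul hgle1 _)
            by_cases htp : t = p₀
            · have hEFt : eps R * F t = M := by rw [htp]; exact hp₀
              have hs0 : b (bV t.1) (bV t.2) ≠ 0 := by
                intro hs
                apply hM0
                rw [← hEFt, hFt, hs, mul_zero, mul_zero, mul_zero]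
              intro hcontra
              have hG1' : eps R * bV.repr x' t.1 ∈ ghost R := aux_eG hR htan h01
              have hG2' : eps R * bV.repr x' t.2 ∈ ghost R := aux_eG hR htan h02
              have hG1 : eps R * bV.repr x t.1 ∈ ghost R := aux_eG hR htan (hcne t.1)
              have hG2 : eps R * bV.repr x t.2 ∈ ghost R := aux_eG hR htan (hcne t.2)
              have hGs : eps R * b (bV t.1) (bV t.2) ∈ ghost R := aux_eG hR htan hs0
              have hEe : (eps R * bV.repr x' t.1) *
                    ((eps R * bV.repr x' t.2) * (eps R * b (bV t.1) (bV t.2)))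
                  = (eps R * bV.repr x t.1) *
                    ((eps R * bV.repr x t.2) * (eps R * b (bV t.1) (bV t.2))) := by
                rw [← hlvlO, ← hlvlO, ← hFt, ← hF't, hcontra, hEFt]
              have hc2 : (eps R * bV.repr x' t.1) * (eps R * bV.repr x' t.2)
                  = (eps R * bV.repr x t.1) * (eps R * bV.repr x t.2) := by
                apply hcanc _ hGs _ (hmul _ hG1' _ hG2') _ (hmul _ hG1 _ hG2)
                calc eps R * b (bV t.1) (bV t.2) *
                      ((eps R * bV.repr x' t.1) * (eps R * bV.repr x' t.2))
                    = (eps R * bV.repr x' t.1) *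
                      ((eps R * bV.repr x' t.2) * (eps R * b (bV t.1) (bV t.2))) := by ring
                  _ = (eps R * bV.repr x t.1) *
                      ((eps R * bV.repr x t.2) * (eps R * b (bV t.1) (bV t.2))) := hEe
                  _ = eps R * b (bV t.1) (bV t.2) *
                      ((eps R * bV.repr x t.1) * (eps R * bV.repr x t.2)) := by ring
              have hj12 : j = t.1 ∨ j = t.2 := by
                rcases Finset.mem_insert.1 hjJ' with h | h
                · exact Or.inl (by rw [h, htp])
                · exact Or.inr (by rw [Finset.mem_singleton.1 h, htp])
              rcases hj12 with hj | hj
              · have hne1 : bV.repr x' t.1 ≠ bV.repr x t.1 := by rw [← hj]; exact hjne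
                have htanc : bV.repr x t.1 ∉ eSet R := hct p₀ hp₀ t.1 ht1'
                have hstrict := aux_lt_tan hR htanc hmle1 hne1
                have hle1 : gle ((eps R * bV.repr x' t.1) * (eps R * bV.repr x' t.2))
                    ((eps R * bV.repr x t.1) * (eps R * bV.repr x' t.2)) :=
                  gle_mul hstrict.1 _
                have hle2 : gle ((eps R * bV.repr x t.1) * (eps R * bV.repr x' t.2))
                    ((eps R * bV.repr x t.1) * (eps R * bV.repr x t.2)) :=
                  gle_mul_left hgle2 _
                rw [← hc2] at hle2
                have heq2 := gle_antisymm hle1 hle2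
                apply hstrict.2
                apply hcanc _ hG2' _ hG1' _ hG1
                calc (eps R * bV.repr x' t.2) * (eps R * bV.repr x' t.1)
                    = (eps R * bV.repr x' t.1) * (eps R * bV.repr x' t.2) := by ring
                  _ = (eps R * bV.repr x t.1) * (eps R * bV.repr x' t.2) := heq2
                  _ = (eps R * bV.repr x' t.2) * (eps R * bV.repr x t.1) := by ring
              · have hne2 : bV.repr x' t.2 ≠ bV.repr x t.2 := by rw [← hj]; exact hjne
                have htanc : bV.repr x t.2 ∉ eSet R := hct p₀ hp₀ t.2 ht2'
                have hstrict := aux_lt_tan hR htanc hmle2 hne2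
                have hle1 : gle ((eps R * bV.repr x' t.1) * (eps R * bV.repr x' t.2))
                    ((eps R * bV.repr x' t.1) * (eps R * bV.repr x t.2)) :=
                  gle_mul_left hstrict.1 _
                have hle2 : gle ((eps R * bV.repr x' t.1) * (eps R * bV.repr x t.2))
                    ((eps R * bV.repr x t.1) * (eps R * bV.repr x t.2)) :=
                  gle_mul hgle1 _
                rw [← hc2] at hle2
                have heq2 := gle_antisymm hle1 hle2
                apply hstrict.2
                exact hcanc _ hG1' _ hG2' _ hG2 heq2
            · have hnc : eps R * F t ≠ M := hKeyJ p₀ hp₀ t ht1' ht2' htp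
              intro hcontra
              apply hnc
              exact gle_antisymm (hgleM t) (by rw [← hcontra]; exact hgleF)
          · -- zero term
            have hF't : F' t = 0 := by
              rw [hF']; simp only
              rw [if_neg h12, if_neg h21]
            rw [hF't, mul_zero]
            exact fun h => hM0 h.symm
      have hEq' : eps R * q x' = M := by
        rw [hqeq, hJ₀, hQJ p₀ hp₀]
        exact hp₀
      rcases aux_ghost_sum_mem hR (J₀ ×ˢ J₀) (fun t => eps R * F' t) (fun t => aux_eidem hR _)
        with h0 | ⟨t, ht, hts⟩
      · apply hM0
        rw [← hEq', hQ', Finset.mul_sum]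
        exact h0
      · apply hterm t ht
        rw [← hts, ← Finset.mul_sum, ← hQ']
        exact hEq'
  -- final assembly
  refine ⟨⟨⟨q x, hM.symm.trans hqxM.symm⟩, hqx0⟩,
    insert p.1 {p.2}, insert p'.1 {p'.2}, hcover p p' hpp hp hp', hcard p, hcard p',
    ?_, ?_, ?_, ?_, ?_, hQmin p hp, hQmin p' hp', ?_, ?_⟩
  · -- x = vsup
    apply bV.repr.injective
    unfold vsup
    rw [LinearEquiv.apply_symm_apply]
    ext i
    rw [Finsupp.zipWith_apply, hrestr_repr, hrestr_repr]
    have hiu : i ∈ insert p.1 {p.2} ∪ insert p'.1 ({p'.2} : Finset (Fin n)) := by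
      rw [hcover p p' hpp hp hp']; exact Finset.mem_univ i
    rcases Finset.mem_union.1 hiu with hiJ | hiK
    · by_cases hiK2 : i ∈ insert p'.1 ({p'.2} : Finset (Fin n))
      · rw [if_pos hiJ, if_pos hiK2, aux_rsup_self]
      · rw [if_pos hiJ, if_neg hiK2, aux_rsup_zero (hcne i)]
    · by_cases hiJ2 : i ∈ insert p.1 ({p.2} : Finset (Fin n))
      · rw [if_pos hiJ2, if_pos hiK, aux_rsup_self]
      · rw [if_neg hiJ2, if_pos hiK, aux_zero_rsup (hcne i)]
  · -- restrict J ≠ 0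
    intro hzero
    have h2 := hrestr_repr (insert p.1 {p.2}) p.1
    rw [hzero, if_pos (Finset.mem_insert_self _ _)] at h2
    apply hcne p.1
    rw [← h2, map_zero]
    simp
  · intro hzero
    have h2 := hrestr_repr (insert p'.1 {p'.2}) p'.1
    rw [hzero, if_pos (Finset.mem_insert_self _ _)] at h2
    apply hcne p'.1
    rw [← h2, map_zero]
    simp
  · show q (restrict bV x (insert p.1 {p.2})) ∉ eSet R
    rw [hQJ p hp]
    exact htangJ p hp
  · show q (restrict bV x (insert p'.1 {p'.2})) ∉ eSet R
    rw [hQJ p' hp']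
    exact htangJ p' hp'
  · rw [hQJ p hp]
    exact hp
  · rw [hQJ p' hp']
    exact hp'


end Supertrop
end
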